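/- arXiv:1710.02416 — 2 statements merged into one kernel-verified Lean document; each statement's English description precedes it below -/
import Mathlib

section
/- Let T be a tree on n vertices and define its exponential distance matrix ED_T by (ED_T)_{i,i} = 1 and (ED_T)_{i,j} = q^{d(i,j)} for i ≠ j, where d(i,j) is the graph distance in T. Then det(ED_T) = (1 - q^2)^{n-1}. -/
section helpers
open SimpleGraph

variable {V : Type*} [DecidableEq V] {G : SimpleGraph V}

lemma exists_induce_walk {s : Set V} :
    ∀ {i j : V} (w : G.Walk i j) (_ : ∀ x ∈ w.support, x ∈ s) (hi : i ∈ s) (hj : j ∈ s),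
      ∃ p : (G.induce s).Walk ⟨i, hi⟩ ⟨j, hj⟩, p.length = w.length := by
  intro i j w
  induction w with
  | nil => exact fun _ _ _ => ⟨.nil, rfl⟩
  | @cons a b c hab w ih =>
    intro h ha hc
    have hb : b ∈ s := h b (by simp)
    obtain ⟨p, hp⟩ := ih (fun x hx => h x (by simp [hx])) hb hc
    exact ⟨.cons (by exact hab) p, by show p.length + 1 = _; rw [hp]; rfl⟩

lemma mem_tail_of_walk {v u : V} (huniq : ∀ x, G.Adj v x → x = u)
    {j : V} (hj : j ≠ v) (q : G.Walk v j) : u ∈ q.support.tail := by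
  cases q with
  | nil => exact (hj rfl).elim
  | @cons _ b _ h r =>
    have hb : b = u := huniq b h
    subst hb
    simpa using r.start_mem_support

lemma path_avoids_leaf {v u : V} (huniq : ∀ x, G.Adj v x → x = u)
    {i j : V} (hi : i ≠ v) (hj : j ≠ v) (p : G.Walk i j) (hp : p.IsPath) :
    v ∉ p.support := by
  intro hv
  have hspec := p.take_spec hv
  have hu1 : u ∈ (p.takeUntil v hv).support := by
    have h1 := mem_tail_of_walk huniq hi (p.takeUntil v hv).reverse
    have h2 : u ∈ (p.takeUntil v hv).reverse.support := List.mem_of_mem_tail h1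
    rwa [SimpleGraph.Walk.support_reverse, List.mem_reverse] at h2
  have hu2 : u ∈ (p.dropUntil v hv).support.tail :=
    mem_tail_of_walk huniq hj (p.dropUntil v hv)
  have hnd : p.support.Nodup := hp.support_nodup
  rw [← hspec, SimpleGraph.Walk.support_append] at hnd
  exact (List.nodup_append'.mp hnd).2.2 hu1 hu2

omit [DecidableEq V] in
lemma dist_leaf_add_one (hc : G.Connected) {v u : V} (hadj : G.Adj v u)
    (huniq : ∀ x, G.Adj v x → x = u) {j : V} (hj : j ≠ v) :
    G.dist v j = G.dist u j + 1 := by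
  refine le_antisymm ?_ ?_
  · calc G.dist v j ≤ G.dist v u + G.dist u j := hc.dist_triangle
    _ = G.dist u j + 1 := by rw [SimpleGraph.dist_eq_one_iff_adj.mpr hadj]; ring
  · obtain ⟨w, hw⟩ := hc.exists_walk_length_eq_dist v j
    cases w with
    | nil => exact (hj rfl).elim
    | @cons _ b _ h r =>
      have hb : b = u := huniq b h
      subst hb
      have h2 : G.dist b j ≤ r.length := SimpleGraph.dist_le r
      simp only [SimpleGraph.Walk.length_cons] at hw
      omega

lemma induced_facts (hG : G.IsTree) {v u : V} (hadj : G.Adj v u)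
    (huniq : ∀ x, G.Adj v x → x = u) :
    (G.induce {x : V | x ≠ v}).IsTree ∧
    ∀ i j : {x : V | x ≠ v}, (G.induce {x : V | x ≠ v}).dist i j = G.dist i.1 j.1 := by
  set s : Set V := {x : V | x ≠ v} with hs
  set G' := G.induce s with hG'
  let emb : G' ↪g G := SimpleGraph.Embedding.induce s
  have key : ∀ i j : s, ∃ p : G'.Walk i j, p.length = G.dist i.1 j.1 := by
    intro i j
    obtain ⟨p, hp, hlen⟩ := hG.isConnected.exists_path_of_dist i.1 j.1
    have havoid : ∀ x ∈ p.support, x ∈ s := by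
      intro x hx
      rcases eq_or_ne x v with rfl | hxv
      · exact absurd hx (path_avoids_leaf huniq i.2 j.2 p hp)
      · exact hxv
    obtain ⟨q, hq⟩ := exists_induce_walk p havoid i.2 j.2
    exact ⟨q, by rw [hq, hlen]⟩
  have hconn : G'.Connected := by
    rw [SimpleGraph.connected_iff]
    refine ⟨fun i j => ⟨(key i j).choose⟩, ⟨⟨u, fun h => (G.ne_of_adj hadj).symm h⟩⟩⟩
  have hdist : ∀ i j : s, G'.dist i j = G.dist i.1 j.1 := by
    intro i j
    refine le_antisymm ?_ ?_
    · obtain ⟨p, hp⟩ := key i j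
      exact hp ▸ SimpleGraph.dist_le p
    · obtain ⟨q, hq⟩ := hconn.exists_walk_length_eq_dist i j
      have h3 := SimpleGraph.dist_le (q.map emb.toHom)
      rwa [SimpleGraph.Walk.length_map, hq] at h3
  refine ⟨⟨hconn, ?_⟩, hdist⟩
  intro a c hc
  exact hG.IsAcyclic (c.map emb.toHom) (hc.map emb.injective)

lemma exists_leaf' {V : Type*} [Fintype V] [DecidableEq V] {G : SimpleGraph V}
    (hG : G.IsTree) (h2 : 2 ≤ Fintype.card V) :
    ∃ v u : V, G.Adj v u ∧ ∀ x, G.Adj v x → x = u := by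
  classical
  have hdeg : ∀ v : V, 0 < G.degree v := by
    intro v
    obtain ⟨w, hw⟩ := Fintype.exists_ne_of_one_lt_card (by omega) v
    rw [SimpleGraph.degree_pos_iff_exists_adj]
    obtain ⟨p⟩ := hG.isConnected.preconnected v w
    cases p with
    | nil => exact (hw rfl).elim
    | cons h _ => exact ⟨_, h⟩
  have he := hG.card_edgeFinset
  have hsum : ∑ v, G.degree v = 2 * G.edgeFinset.card :=
    G.sum_degrees_eq_twice_card_edges
  have hex : ∃ v : V, G.degree v = 1 := by
    by_contra hcon
    push_neg at hcon
    have h2deg : ∀ v : V, 2 ≤ G.degree v := by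
      intro v; have := hdeg v; have := hcon v; omega
    have hle : 2 * Fintype.card V ≤ ∑ v, G.degree v := by
      calc 2 * Fintype.card V = ∑ _v : V, 2 := by
            simp [Finset.sum_const, Finset.card_univ, mul_comm]
        _ ≤ ∑ v, G.degree v := Finset.sum_le_sum fun v _ => h2deg v
    omega
  obtain ⟨v, hv⟩ := hex
  rw [← SimpleGraph.card_neighborFinset_eq_degree, Finset.card_eq_one] at hv
  obtain ⟨u, hu⟩ := hv
  have hadj : G.Adj v u := by
    rw [← SimpleGraph.mem_neighborFinset, hu]; exact Finset.mem_singleton_self u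
  exact ⟨v, u, hadj, fun x hx => by
    have : x ∈ G.neighborFinset v := (SimpleGraph.mem_neighborFinset _ _ _).mpr hx
    rwa [hu, Finset.mem_singleton] at this⟩

theorem det_aux {R : Type*} [CommRing R] (q : R) :
    ∀ (N : ℕ) {V : Type} [Fintype V] [DecidableEq V] (G : SimpleGraph V), G.IsTree →
      Fintype.card V = N →
      (Matrix.of fun i j => if i = j then (1 : R) else q ^ G.dist i j).det
        = (1 - q ^ 2) ^ (N - 1) := by
  intro N
  induction N with
  | zero =>
    intro V _ _ G hG hcard
    obtain ⟨x⟩ := hG.isConnected.nonempty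
    rw [Fintype.card_eq_zero_iff] at hcard
    exact hcard.elim x
  | succ n ih =>
    intro V _ _ G hG hcard
    rcases Nat.eq_zero_or_pos n with rfl | hn
    · obtain ⟨x, hx⟩ := Fintype.card_eq_one_iff.mp hcard
      haveI : Unique V := ⟨⟨x⟩, hx⟩
      rw [Matrix.det_unique]
      simp
    · obtain ⟨v, u, hadj, huniq⟩ := exists_leaf' hG (by omega)
      set M : Matrix V V R := Matrix.of fun i j => if i = j then (1 : R) else q ^ G.dist i j
        with hM
      have hvu : v ≠ u := G.ne_of_adj hadj
      have hdvu : G.dist v u = 1 := SimpleGraph.dist_eq_one_iff_adj.mpr hadj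
      have hduv : G.dist u v = 1 := by rw [SimpleGraph.dist_comm]; exact hdvu
      obtain ⟨htree', hdist'⟩ := induced_facts hG hadj huniq
      set G' := G.induce {x : V | x ≠ v} with hG'
      set M' := M.updateRow v (M v + (-q) • M u) with hM'
      have hdet1 : M.det = M'.det := (Matrix.det_updateRow_add_smul_self M hvu (-q)).symm
      let e := Equiv.sumCompl (fun x : V => x ≠ v)
      have hblock : M'.submatrix e e =
          Matrix.fromBlocks
            (Matrix.of fun i j : {x : V // x ≠ v} =>
              if i = j then (1 : R) else q ^ G'.dist i j)
            (Matrix.of fun (i : {x : V // x ≠ v}) (_ : {x : V // ¬x ≠ v}) => M i.1 v)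
            0
            (Matrix.of fun (_ _ : {x : V // ¬x ≠ v}) => 1 - q ^ 2) := by
        ext a b
        cases a with
        | inl i =>
          have hrow : M' i.1 = M i.1 := Matrix.updateRow_ne (i := v) i.2
          cases b with
          | inl j =>
            simp only [Matrix.submatrix_apply, Matrix.fromBlocks_apply₁₁]
            show M' i.1 j.1 = _
            rw [hrow]
            by_cases hij : i = j
            · subst hij; simp [hM]
            · have hij' : i.1 ≠ j.1 := fun h => hij (Subtype.ext h)
              simp [hM, hij, hij', hdist' i j]
          | inr x =>
            simp only [Matrix.submatrix_apply, Matrix.fromBlocks_apply₁₂]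
            show M' i.1 x.1 = M i.1 v
            rw [hrow, not_not.mp x.2]
        | inr x =>
          have hx : x.1 = v := not_not.mp x.2
          cases b with
          | inl j =>
            simp only [Matrix.submatrix_apply, Matrix.fromBlocks_apply₂₁]
            show M' x.1 j.1 = 0
            rw [hx]
            show (M.updateRow v (M v + (-q) • M u)) v j.1 = 0
            rw [Matrix.updateRow_self]
            have hjv : j.1 ≠ v := j.2
            by_cases hju : j.1 = u
            · simp [hM, hju, hvu, Ne.symm hvu, hdvu]
            · have hdv : G.dist v j.1 = G.dist u j.1 + 1 :=
                dist_leaf_add_one hG.isConnected hadj huniq hjv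
              have huj : u ≠ j.1 := fun h => hju h.symm
              simp only [Pi.add_apply, Pi.smul_apply, smul_eq_mul, hM, Matrix.of_apply]
              rw [if_neg (Ne.symm hjv), if_neg huj, hdv, pow_succ]
              ring
          | inr y =>
            have hy : y.1 = v := not_not.mp y.2
            simp only [Matrix.submatrix_apply, Matrix.fromBlocks_apply₂₂]
            show M' x.1 y.1 = 1 - q ^ 2
            rw [hx, hy]
            show (M.updateRow v (M v + (-q) • M u)) v v = 1 - q ^ 2
            rw [Matrix.updateRow_self]
            simp only [Pi.add_apply, Pi.smul_apply, smul_eq_mul, hM, Matrix.of_apply]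
            rw [if_pos trivial, if_neg (Ne.symm hvu), hduv]
            ring
      haveI : Unique {x : V // ¬x ≠ v} :=
        ⟨⟨⟨v, not_not_intro rfl⟩⟩, fun a => Subtype.ext (not_not.mp a.2)⟩
      have hcard' : Fintype.card {x : V // x ≠ v} = n := by
        have h1 : Fintype.card {x : V // ¬x = v} = Fintype.card V - Fintype.card {x : V // x = v} :=
          Fintype.card_subtype_compl _
        rw [Fintype.card_subtype_eq, hcard] at h1
        simpa using h1
      have hdetA := ih (V := {x : V // x ≠ v}) G' htree' hcard'
      rw [hdet1, ← Matrix.det_submatrix_equiv_self e M', hblock,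
        Matrix.det_fromBlocks_zero₂₁, hdetA, Matrix.det_unique]
      simp only [Matrix.of_apply]
      rw [← pow_succ]
      congr 1
      omega

end helpers

/-- The exponential distance matrix of a graph: diagonal entries `1`,
off-diagonal entries `q ^ d(i,j)` where `d` is the graph distance. -/
noncomputable def expDist {n : ℕ} (G : SimpleGraph (Fin n))
    {R : Type*} [CommRing R] (q : R) : Matrix (Fin n) (Fin n) R :=
  Matrix.of fun i j => if i = j then 1 else q ^ G.dist i j

/-- For a tree `T` on `n` vertices, `det(ED_T) = (1 - q^2)^(n-1)` in `ℝ[q]`. -/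
theorem det_expDist_tree {n : ℕ} (G : SimpleGraph (Fin n)) (hG : G.IsTree) :
    (expDist G (Polynomial.X : Polynomial ℝ)).det
      = (1 - Polynomial.X ^ 2) ^ (n - 1) := by
  have h := det_aux (Polynomial.X : Polynomial ℝ) n G hG (Fintype.card_fin n)
  simpa [expDist] using h
end

section
/- Let T be a tree on vertex set [n], B ⊆ [n] a proper subset with |B| = r < n, and q ∈ R. Then det(L^q_T[B|B]) ≥ 0, where L^q_T[B|B] is the principal submatrix of the q-Laplacian indexed by B. In particular every proper principal minor of L^q_T is nonnegative for all real q. -/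
set_option linter.unusedSectionVars false

open SimpleGraph Walk

section TreeParent

variable {V : Type*} [DecidableEq V] {G : SimpleGraph V}
variable (hup : ∀ v w : V, ∃! p : G.Walk v w, p.IsPath) (r : V)

noncomputable def tpath (v : V) : G.Walk v r := (hup v r).exists.choose

lemma tpath_isPath (v : V) : (tpath hup r v).IsPath := (hup v r).exists.choose_spec

lemma tpath_unique {v : V} (p : G.Walk v r) (hp : p.IsPath) : p = tpath hup r v :=
  (hup v r).unique hp (tpath_isPath hup r v)

noncomputable def par (v : V) : V := (tpath hup r v).getVert 1

lemma par_self : par hup r r = r := by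
  have h : (Walk.nil : G.Walk r r) = tpath hup r r := tpath_unique hup r Walk.nil (by simp)
  rw [par, ← h]
  rfl

lemma tpath_not_nil {v : V} (hv : v ≠ r) : ¬ (tpath hup r v).Nil := Walk.not_nil_of_ne hv

lemma adj_par {v : V} (hv : v ≠ r) : G.Adj v (par hup r v) :=
  (tpath hup r v).adj_snd (tpath_not_nil hup r hv)

lemma par_ne {v : V} (hv : v ≠ r) : par hup r v ≠ v := (adj_par hup r hv).ne'

lemma tpath_length {v : V} (hv : v ≠ r) :
    (tpath hup r v).length = (tpath hup r (par hup r v)).length + 1 := by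
  have hn := tpath_not_nil hup r hv
  have ht : (tpath hup r v).tail.IsPath := (tpath_isPath hup r v).tail
  have key : (tpath hup r v).tail = tpath hup r (par hup r v) := tpath_unique hup r _ ht
  rw [← Walk.length_tail_add_one hn, key]
  rfl

lemma par_eq_of_mem_support {u v : V} (h : G.Adj v u) (hm : u ∈ (tpath hup r v).support) :
    par hup r v = u := by
  have hne : v ≠ u := h.ne
  have ht : ((tpath hup r v).takeUntil u hm).IsPath := (tpath_isPath hup r v).takeUntil hm
  have hs : (Walk.cons h Walk.nil : G.Walk v u).IsPath := by simp [hne]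
  have huniq : (tpath hup r v).takeUntil u hm = Walk.cons h Walk.nil := (hup v u).unique ht hs
  have hsplit := (tpath hup r v).take_spec hm
  rw [huniq] at hsplit
  show (tpath hup r v).getVert 1 = u
  conv_lhs => rw [← hsplit]
  simp [Walk.cons_append, Walk.getVert_cons_succ]

lemma par_or (u v : V) (h : G.Adj u v) : par hup r u = v ∨ par hup r v = u := by
  by_cases hm : u ∈ (tpath hup r v).support
  · exact Or.inr (par_eq_of_mem_support hup r h.symm hm)
  · left
    have hc : (Walk.cons h (tpath hup r v)).IsPath := (tpath_isPath hup r v).cons hm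
    have huniq := tpath_unique hup r (Walk.cons h (tpath hup r v)) hc
    show (tpath hup r u).getVert 1 = v
    rw [← huniq]
    simp [Walk.getVert_cons_succ]

lemma par_not_both {u v : V} (h : G.Adj u v) (h1 : par hup r u = v) : par hup r v ≠ u := by
  intro h2
  have hur : u ≠ r := by
    rintro rfl
    rw [par_self] at h1
    exact h.ne h1
  have hvr : v ≠ r := by
    rintro rfl
    rw [par_self] at h2
    exact h.ne h2.symm
  have l1 := tpath_length hup r hur
  have l2 := tpath_length hup r hvr
  rw [h1] at l1
  rw [h2] at l2
  omega

variable [Fintype V] [DecidableRel G.Adj]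

lemma children_eq {i : V} (hi : i ≠ r) :
    Finset.univ.filter (fun v => par hup r v = i) = (G.neighborFinset i).erase (par hup r i) := by
  ext v
  simp only [Finset.mem_filter, Finset.mem_univ, true_and, Finset.mem_erase,
    SimpleGraph.mem_neighborFinset]
  constructor
  · intro hv
    have hvr : v ≠ r := by
      rintro rfl
      rw [par_self] at hv
      exact hi hv.symm
    have hadj : G.Adj v i := hv ▸ adj_par hup r hvr
    refine ⟨fun hc => ?_, hadj.symm⟩
    exact par_not_both hup r hadj.symm hc.symm hv
  · rintro ⟨hne, hadj⟩
    rcases par_or hup r i v hadj with h1 | h2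
    · exact absurd h1.symm hne
    · exact h2

lemma children_card {i : V} (hi : i ≠ r) :
    (Finset.univ.filter (fun v => par hup r v = i)).card = G.degree i - 1 := by
  rw [children_eq hup r hi, Finset.card_erase_of_mem
    (by rw [SimpleGraph.mem_neighborFinset]; exact adj_par hup r hi)]
  rfl

lemma one_le_degree {i x : V} (h : G.Adj i x) : 1 ≤ G.degree i := by
  rw [← SimpleGraph.card_neighborFinset_eq_degree]
  exact Finset.card_pos.mpr ⟨x, by rw [SimpleGraph.mem_neighborFinset]; exact h⟩

end TreeParent

noncomputable def qLap {n : ℕ} (G : SimpleGraph (Fin n)) [DecidableRel G.Adj]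
    {R : Type*} [CommRing R] (q : R) : Matrix (Fin n) (Fin n) R :=
  Matrix.of fun i j =>
    if i = j then 1 + q ^ 2 * ((G.degree i : R) - 1)
    else if G.Adj i j then -q else 0

/-- For a tree `T` on `[n]`, a proper subset `B ⊊ [n]` and any real `q`, the
principal minor `det(L^q_T[B|B])` is nonnegative. -/
theorem qLap_proper_principal_minor_nonneg {n : ℕ} (G : SimpleGraph (Fin n))
    [DecidableRel G.Adj] (hG : G.IsTree) (B : Finset (Fin n))
    (hB : B ≠ Finset.univ) (q : ℝ) :
    0 ≤ ((qLap G q).submatrix (fun i : B => (i : Fin n)) (fun i : B => (i : Fin n))).det := by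
  classical
  obtain ⟨r, hr⟩ : ∃ r, r ∉ B := by
    by_contra hc
    push_neg at hc
    exact hB (Finset.eq_univ_iff_forall.mpr hc)
  have hup : ∀ v w : Fin n, ∃! p : G.Walk v w, p.IsPath := hG.existsUnique_path
  set f : Fin n → Fin n → ℝ := fun i v =>
    (if par hup r v = i then q else 0) - (if v = i then 1 else 0) with hf
  have key : ∀ i j : Fin n, i ≠ r → j ≠ r → (∑ v : Fin n, f i v * f j v) = qLap G q i j := by
    intro i j hi hj
    by_cases hij : i = j
    · subst hij
      have hterm : ∀ v : Fin n, f i v * f i v =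
          (if par hup r v = i then q ^ 2 else 0) + (if v = i then 1 else 0) := by
        intro v
        by_cases h1 : par hup r v = i <;> by_cases h2 : v = i
        · exact absurd (h2 ▸ h1) (par_ne hup r hi)
        · simp [hf, h1, h2]; ring
        · subst h2; simp [hf, par_ne hup r hi]
        · simp [hf, h1, h2]
      rw [Finset.sum_congr rfl fun v _ => hterm v, Finset.sum_add_distrib,
        Finset.sum_ite_eq' Finset.univ i (fun _ => (1 : ℝ)),
        ← Finset.sum_filter, Finset.sum_const, children_card hup r hi]
      have h1 : 1 ≤ G.degree i := one_le_degree (adj_par hup r hi)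
      simp only [qLap, Matrix.of_apply, if_pos rfl, Finset.mem_univ, if_true, nsmul_eq_mul]
      push_cast [Nat.cast_sub h1]
      ring
    · have hterm : ∀ v : Fin n, f i v * f j v =
          (if v = i then (if par hup r i = j then -q else 0) else 0) +
          (if v = j then (if par hup r j = i then -q else 0) else 0) := by
        intro v
        have hpi := par_ne hup r hi
        have hpj := par_ne hup r hj
        by_cases h1 : v = i
        · subst h1
          by_cases h3 : par hup r v = j <;> simp [hf, h3, hij, Ne.symm hij, hpi] <;> ring
        · by_cases h2 : v = j
          · subst h2
            by_cases h3 : par hup r v = i <;> simp [hf, h1, Ne.symm h1, h3, hpj] <;> ring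
          · by_cases h3 : par hup r v = i <;> simp [hf, h1, h2, h3, hij] <;> ring
      rw [Finset.sum_congr rfl fun v _ => hterm v, Finset.sum_add_distrib,
        Finset.sum_ite_eq' Finset.univ i _, Finset.sum_ite_eq' Finset.univ j _]
      simp only [Finset.mem_univ, if_true]
      have hq : qLap G q i j = if G.Adj i j then -q else 0 := by
        simp [qLap, hij]
      rw [hq]
      by_cases ha : G.Adj i j
      · rcases par_or hup r i j ha with h1 | h2
        · rw [if_pos h1, if_neg (par_not_both hup r ha h1), if_pos ha]; ring
        · rw [if_pos h2, if_neg fun hc => par_not_both hup r ha.symm h2 hc, if_pos ha]; ring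
      · have g1 : par hup r i ≠ j := fun hc => ha (hc ▸ adj_par hup r hi)
        have g2 : par hup r j ≠ i := fun hc => ha ((hc ▸ adj_par hup r hj).symm)
        rw [if_neg g1, if_neg g2, if_neg ha]; ring
  let X : Matrix {x // x ∈ B} (Fin n) ℝ := Matrix.of fun b v => f (↑b) v
  have hXX : X * X.conjTranspose =
      (qLap G q).submatrix (fun i : B => (i : Fin n)) (fun i : B => (i : Fin n)) := by
    ext b b'
    have hb : (↑b : Fin n) ≠ r := fun hc => hr (hc ▸ b.2)
    have hb' : (↑b' : Fin n) ≠ r := fun hc => hr (hc ▸ b'.2)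
    simp only [Matrix.mul_apply, Matrix.conjTranspose_apply, Matrix.submatrix_apply, X,
      Matrix.of_apply, star_trivial]
    exact key ↑b ↑b' hb hb'
  have psd := Matrix.posSemidef_self_mul_conjTranspose X
  rw [hXX] at psd
  rw [psd.isHermitian.det_eq_prod_eigenvalues]
  exact Finset.prod_nonneg fun i _ => psd.eigenvalues_nonneg i
end
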